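/- Set L(y) = Z'(y) = −4y/(1+y²)² for y > 0. Then: (i) L'(y) = (2Z(y)−1)·L(y)/y for all y > 0; equivalently, for every differentiable g : (0,∞) → ℝ, A(L·g)(y) + L(y)·(A* g)(y) = (2L(y)/y)·g(y) for all y > 0; (ii) L(y) < 0 for all y > 0; (iii) for every smooth compactly supported f : (0,∞) → ℝ, ∫₀^∞ (H f)(y)·L(y)·(A f)(y)·y dy = ∫₀^∞ (L(y)/y)·((A f)(y))²·y dy ≤ 0. -/

import Mathlib

open MeasureTheory

noncomputable section

/-- `Z(y) = (1-y²)/(1+y²)`. -/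
def Zf (y : ℝ) : ℝ := (1 - y ^ 2) / (1 + y ^ 2)

/-- The potential `V(y) = (y⁴-6y²+1)/(1+y²)²`. -/
def Vf (y : ℝ) : ℝ := (y ^ 4 - 6 * y ^ 2 + 1) / (1 + y ^ 2) ^ 2

/-- The linearized Hamiltonian `H f = -f'' - f'/y + V f / y²`. -/
def Hop (f : ℝ → ℝ) (y : ℝ) : ℝ :=
  -(deriv (deriv f) y) - deriv f y / y + Vf y * f y / y ^ 2

/-- The first order factor `A f = -f' + (Z/y) f`. -/
def Aop (f : ℝ → ℝ) (y : ℝ) : ℝ := -deriv f y + Zf y / y * f y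

/-- The adjoint factor `A* f = f' + ((1+Z)/y) f`. -/
def Astar (f : ℝ → ℝ) (y : ℝ) : ℝ := deriv f y + (1 + Zf y) / y * f y

/-- `L(y) = Z'(y) = -4y/(1+y²)²`. -/
def Lf (y : ℝ) : ℝ := deriv Zf y

lemma one_add_sq_ne (y : ℝ) : (1 : ℝ) + y ^ 2 ≠ 0 := by positivity

lemma hasDerivAt_Zf (y : ℝ) : HasDerivAt Zf (-4 * y / (1 + y ^ 2) ^ 2) y := by
  have h : HasDerivAt Zf _ y := ((hasDerivAt_const y (1:ℝ)).sub (hasDerivAt_pow 2 y)).div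
      ((hasDerivAt_const y (1:ℝ)).add (hasDerivAt_pow 2 y)) (one_add_sq_ne y)
  convert h using 1
  simp only [Pi.sub_apply, Pi.add_apply, id]
  field_simp
  ring

lemma Lf_eq (y : ℝ) : Lf y = -4 * y / (1 + y ^ 2) ^ 2 := (hasDerivAt_Zf y).deriv

lemma Lf_def' : Lf = fun y => -4 * y / (1 + y ^ 2) ^ 2 := funext Lf_eq

lemma hasDerivAt_Lf (y : ℝ) : HasDerivAt Lf ((12 * y ^ 2 - 4) / (1 + y ^ 2) ^ 3) y := by
  rw [Lf_def']
  have h : HasDerivAt (fun y : ℝ => -4 * y / (1 + y ^ 2) ^ 2) _ y := (((hasDerivAt_id y).const_mul (-4:ℝ)).div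
      (((hasDerivAt_const y (1:ℝ)).add (hasDerivAt_pow 2 y)).pow 2) (pow_ne_zero 2 (one_add_sq_ne y)))
  convert h using 1
  have := one_add_sq_ne y
  simp only [Pi.sub_apply, Pi.add_apply, id]
  field_simp
  ring

lemma part2 (y : ℝ) (hy : 0 < y) : deriv Lf y = (2 * Zf y - 1) * Lf y / y := by
  rw [(hasDerivAt_Lf y).deriv, Zf, Lf_eq]
  have := one_add_sq_ne y
  field_simp
  ring

lemma part3 (g : ℝ → ℝ) (hg : ∀ y > (0:ℝ), DifferentiableAt ℝ g y) (y : ℝ) (hy : 0 < y) :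
    Aop (fun t => Lf t * g t) y + Lf y * Astar g y = 2 * Lf y / y * g y := by
  have hd : deriv (fun t => Lf t * g t) y
      = (12 * y ^ 2 - 4) / (1 + y ^ 2) ^ 3 * g y + Lf y * deriv g y :=
    ((hasDerivAt_Lf y).mul ((hg y hy).hasDerivAt)).deriv
  rw [Aop, Astar, hd, Zf, Lf_eq]
  have := one_add_sq_ne y
  have hy' := hy.ne'
  field_simp
  ring

lemma part4 (y : ℝ) (hy : 0 < y) : Lf y < 0 := by
  rw [Lf_eq]
  apply div_neg_of_neg_of_pos
  · nlinarith
  · positivity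

lemma continuous_Zf : Continuous Zf := by
  apply Continuous.div (by continuity) (by continuity) one_add_sq_ne

lemma continuous_Lf : Continuous Lf := by
  rw [Lf_def']
  exact Continuous.div (by continuity) (by continuity) (fun y => pow_ne_zero 2 (one_add_sq_ne y))

lemma continuous_Vf : Continuous Vf := by
  apply Continuous.div (by continuity) (by continuity) (fun y => pow_ne_zero 2 (one_add_sq_ne y))

lemma part5 (f : ℝ → ℝ) (hf : ContDiff ℝ (⊤ : ℕ∞) f) (hsupp : HasCompactSupport f)
    (hsub : tsupport f ⊆ Set.Ioi 0) :
    (∫ y in Set.Ioi (0 : ℝ), Hop f y * Lf y * Aop f y * y)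
      = (∫ y in Set.Ioi (0 : ℝ), (Lf y / y) * (Aop f y) ^ 2 * y) ∧
    (∫ y in Set.Ioi (0 : ℝ), (Lf y / y) * (Aop f y) ^ 2 * y) ≤ 0 := by
  have hf1 : Differentiable ℝ f := hf.differentiable (by norm_num)
  have hfd : ContDiff ℝ (⊤ : ℕ∞) (deriv f) := (contDiff_infty_iff_deriv.mp hf).2
  have hf2 : Differentiable ℝ (deriv f) := hfd.differentiable (by norm_num)
  have hcont1 : Continuous (deriv f) := hfd.continuous
  have hcont2 : Continuous (deriv (deriv f)) := (contDiff_infty_iff_deriv.mp hfd).2.continuous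
  set K := tsupport f with hK
  -- vanishing outside the support
  have hev : ∀ y ∉ K, f =ᶠ[nhds y] 0 := by
    intro y hy
    filter_upwards [(isClosed_tsupport f).isOpen_compl.mem_nhds hy] with t ht
    exact image_eq_zero_of_notMem_tsupport ht
  have hb0 : ∀ y ∉ K, deriv f y = 0 := by
    intro y hy
    rw [Filter.EventuallyEq.deriv_eq (hev y hy)]
    exact deriv_const y 0
  have hA0 : ∀ y ∉ K, Aop f y = 0 := by
    intro y hy
    simp [Aop, hb0 y hy, image_eq_zero_of_notMem_tsupport hy]
  set W : ℝ → ℝ := fun t => Lf t * (Aop f t) ^ 2 * t with hWdef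
  set D : ℝ → ℝ := fun t =>
      2 * (Hop f t * Lf t * Aop f t * t - Lf t / t * (Aop f t) ^ 2 * t) with hDdef
  -- the key pointwise derivative identity
  have hW : ∀ y, HasDerivAt W (D y) y := by
    intro y
    by_cases hyK : y ∈ K
    · have hy : 0 < y := hsub hyK
      have hy' : y ≠ 0 := hy.ne'
      -- derivative of Aop f at y
      have hA : HasDerivAt (fun t => Aop f t)
          (-(deriv (deriv f) y) +
            (((-4 * y / (1 + y ^ 2) ^ 2) * y - Zf y * 1) / y ^ 2 * f y
              + Zf y / y * deriv f y)) y := by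
        have h1 : HasDerivAt (fun t => -deriv f t) (-(deriv (deriv f) y)) y :=
          ((hf2 y).hasDerivAt).neg
        have h2 : HasDerivAt (fun t => Zf t / t)
            (((-4 * y / (1 + y ^ 2) ^ 2) * y - Zf y * 1) / y ^ 2) y :=
          (hasDerivAt_Zf y).div (hasDerivAt_id y) hy'
        exact h1.add (h2.mul ((hf1 y).hasDerivAt))
      have hWy : HasDerivAt W
          ((((12 * y ^ 2 - 4) / (1 + y ^ 2) ^ 3) * (Aop f y) ^ 2 +
              Lf y * (2 * (Aop f y) ^ 1 *
                (-(deriv (deriv f) y) +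
                  (((-4 * y / (1 + y ^ 2) ^ 2) * y - Zf y * 1) / y ^ 2 * f y
                    + Zf y / y * deriv f y)))) * y
            + (Lf y * (Aop f y) ^ 2) * 1) y :=
        ((hasDerivAt_Lf y).mul (hA.pow 2)).mul (hasDerivAt_id y)
      convert hWy using 1
      simp only [hDdef, Hop, Aop, Zf, Vf, Lf_eq]
      have h1 := one_add_sq_ne y
      field_simp
      ring
    · have hW0 : W =ᶠ[nhds y] (fun _ => (0:ℝ)) := by
        filter_upwards [(isClosed_tsupport f).isOpen_compl.mem_nhds hyK] with t ht
        simp [hWdef, hA0 t ht]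
      have : HasDerivAt W 0 y :=
        (hasDerivAt_const y (0:ℝ)).congr_of_eventuallyEq hW0
      simpa [hDdef, hA0 y hyK] using this
  -- integrability helper
  have key : ∀ h : ℝ → ℝ, ContinuousOn h (Set.Ioi 0) → (∀ x ∉ K, h x = 0) →
      IntegrableOn h (Set.Ioi 0) := by
    intro h hc h0
    have hKc : IsCompact K := hsupp
    have hIK : IntegrableOn h K := (hc.mono hsub).integrableOn_compact hKc
    have hI2 : IntegrableOn h (Set.Ioi 0 \ K) := by
      have : IntegrableOn (fun _ => (0:ℝ)) (Set.Ioi 0 \ K) := integrableOn_zero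
      exact this.congr_fun (fun x hx => (h0 x hx.2).symm)
        (measurableSet_Ioi.diff (isClosed_tsupport f).measurableSet)
    exact (hIK.union hI2).mono_set (fun x hx => by
      by_cases hxK : x ∈ K
      exacts [Or.inl hxK, Or.inr ⟨hx, hxK⟩])
  -- continuity of the integrands on Ioi 0
  have hcA : ContinuousOn (fun y => Aop f y) (Set.Ioi 0) := by
    apply ContinuousOn.add (hcont1.neg.continuousOn)
    exact (continuous_Zf.continuousOn.div continuousOn_id
      (fun x hx => ne_of_gt hx)).mul hf1.continuous.continuousOn
  have hcH : ContinuousOn (fun y => Hop f y) (Set.Ioi 0) := by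
    apply ContinuousOn.add
    · exact ContinuousOn.sub hcont2.neg.continuousOn
        (hcont1.continuousOn.div continuousOn_id (fun x hx => ne_of_gt hx))
    · exact (continuous_Vf.continuousOn.mul hf1.continuous.continuousOn).div
        (continuousOn_id.pow 2) (fun x hx => pow_ne_zero 2 (ne_of_gt hx))
  have hI1int : IntegrableOn (fun y => Hop f y * Lf y * Aop f y * y) (Set.Ioi 0) := by
    apply key
    · exact ((hcH.mul continuous_Lf.continuousOn).mul hcA).mul continuousOn_id
    · intro x hx; simp [hA0 x hx]
  have hI2int : IntegrableOn (fun y => Lf y / y * (Aop f y) ^ 2 * y) (Set.Ioi 0) := by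
    apply key
    · exact ((continuous_Lf.continuousOn.div continuousOn_id
        (fun x hx => ne_of_gt hx)).mul (hcA.pow 2)).mul continuousOn_id
    · intro x hx; simp [hA0 x hx]
  have hDint : IntegrableOn D (Set.Ioi 0) := by
    simp only [hDdef]
    exact ((hI1int.sub hI2int).const_mul 2)
  -- W tends to 0 at infinity
  have hWtop : Filter.Tendsto W Filter.atTop (nhds 0) := by
    obtain ⟨r, hr⟩ := hsupp.bddAbove
    apply Filter.Tendsto.congr' (f₁ := fun _ => (0:ℝ))
    · filter_upwards [Filter.eventually_gt_atTop r] with x hx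
      have : x ∉ K := fun hxK => absurd (hr hxK) (not_le.mpr hx)
      simp [hWdef, hA0 x this]
    · exact tendsto_const_nhds
  -- FTC
  have hint : ∫ y in Set.Ioi (0:ℝ), D y = 0 - W 0 :=
    MeasureTheory.integral_Ioi_of_hasDerivAt_of_tendsto'
      (fun x _ => hW x) hDint hWtop
  have hW0 : W 0 = 0 := by simp [hWdef]
  rw [hW0, sub_zero] at hint
  have hsplit : ∫ y in Set.Ioi (0:ℝ), D y =
      2 * ((∫ y in Set.Ioi (0:ℝ), Hop f y * Lf y * Aop f y * y)
        - ∫ y in Set.Ioi (0:ℝ), Lf y / y * (Aop f y) ^ 2 * y) := by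
    simp only [hDdef]
    rw [MeasureTheory.integral_const_mul, MeasureTheory.integral_sub hI1int hI2int]
  constructor
  · have := hsplit ▸ hint
    linarith [this]
  · apply MeasureTheory.setIntegral_nonpos measurableSet_Ioi
    intro x hx
    have hx0 : (0:ℝ) < x := hx
    have hL : Lf x / x < 0 := div_neg_of_neg_of_pos (part4 x hx0) hx0
    have : (Aop f x) ^ 2 * x ≥ 0 := mul_nonneg (sq_nonneg _) hx0.le
    nlinarith

/-- Structure of `L`: `L' = (2Z-1)L/y` (equivalently `A(Lg) + L A*g = (2L/y)g`),
`L < 0` on `(0,∞)`, and the resulting non-positivity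
`∫ (Hf) L (Af) y dy = ∫ (L/y)(Af)² y dy ≤ 0`. -/
theorem L_structure :
    (∀ y > (0 : ℝ), Lf y = -4 * y / (1 + y ^ 2) ^ 2) ∧
    (∀ y > (0 : ℝ), deriv Lf y = (2 * Zf y - 1) * Lf y / y) ∧
    (∀ g : ℝ → ℝ, (∀ y > (0 : ℝ), DifferentiableAt ℝ g y) →
      ∀ y > (0 : ℝ),
        Aop (fun t => Lf t * g t) y + Lf y * Astar g y = 2 * Lf y / y * g y) ∧
    (∀ y > (0 : ℝ), Lf y < 0) ∧
    (∀ f : ℝ → ℝ, ContDiff ℝ (⊤ : ℕ∞) f → HasCompactSupport f →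
      tsupport f ⊆ Set.Ioi 0 →
      (∫ y in Set.Ioi (0 : ℝ), Hop f y * Lf y * Aop f y * y)
        = (∫ y in Set.Ioi (0 : ℝ), (Lf y / y) * (Aop f y) ^ 2 * y) ∧
      (∫ y in Set.Ioi (0 : ℝ), (Lf y / y) * (Aop f y) ^ 2 * y) ≤ 0) := by
  exact ⟨fun y _ => Lf_eq y, fun y hy => part2 y hy, fun g hg y hy => part3 g hg y hy,
    fun y hy => part4 y hy, fun f hf hs hsub => part5 f hf hs hsub⟩

end
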